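/- Let c be an m-exponent and B ∈ F(c). Then M := ∑_{j=1}^m c_j B_j^* B_j is positive definite, each ψ(B)_j ψ(B)_j^* is positive definite (so that Φ(B) := φ(ψ(B)) is well defined), and moreover Φ(B) is equivalent to B and Φ(B) ∈ F(c). -/

import Mathlib

open MeasureTheory ENNReal Matrix Filter Topology

noncomputable section

/-- The space of `m`-transformations: tuples of linear maps `ℝ^n → ℝ^{n_j}`,
represented as matrices. -/
abbrev MTrans (m n : ℕ) (nd : Fin m → ℕ) := ∀ j : Fin m, Matrix (Fin (nd j)) (Fin n) ℝ

/-- A valid input for the Brascamp–Lieb inequality: each `f j` is measurable and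
has positive finite integral. -/
def IsInput {m : ℕ} {nd : Fin m → ℕ} (f : ∀ j : Fin m, (Fin (nd j) → ℝ) → ℝ≥0∞) : Prop :=
  ∀ j, Measurable (f j) ∧ 0 < ∫⁻ y, f j y ∧ ∫⁻ y, f j y < ⊤

/-- The Brascamp–Lieb ratio `BL(B,c;f)`. -/
def BLratio {m n : ℕ} {nd : Fin m → ℕ} (B : MTrans m n nd) (c : Fin m → ℝ)
    (f : ∀ j : Fin m, (Fin (nd j) → ℝ) → ℝ≥0∞) : ℝ≥0∞ :=
  (∫⁻ x : Fin n → ℝ, ∏ j, f j (B j *ᵥ x) ^ c j) / ∏ j, (∫⁻ y, f j y) ^ c j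

/-- The Brascamp–Lieb constant `BL(B,c)`. -/
def BLconst {m n : ℕ} {nd : Fin m → ℕ} (B : MTrans m n nd) (c : Fin m → ℝ) : ℝ≥0∞ :=
  ⨆ (f : ∀ j : Fin m, (Fin (nd j) → ℝ) → ℝ≥0∞) (_ : IsInput f), BLratio B c f

/-- Membership in `F(c)`: finite BL constant and projection-normalised. -/
def MemF {m n : ℕ} {nd : Fin m → ℕ} (B : MTrans m n nd) (c : Fin m → ℝ) : Prop :=
  BLconst B c < ⊤ ∧ ∀ j, B j * (B j)ᵀ = 1

/-- Membership in `G(c)`: the datum `(B,c)` is geometric. -/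
def Geometric {m n : ℕ} {nd : Fin m → ℕ} (B : MTrans m n nd) (c : Fin m → ℝ) : Prop :=
  (∀ j, B j * (B j)ᵀ = 1) ∧ ∑ j, c j • ((B j)ᵀ * B j) = 1

/-- Equivalence of `m`-transformations: `B̃_j = T_j⁻¹ B_j T` for invertible `T, T_j`. -/
def EquivTrans {m n : ℕ} {nd : Fin m → ℕ} (B Bt : MTrans m n nd) : Prop :=
  ∃ (T : Matrix (Fin n) (Fin n) ℝ) (Tj : ∀ j, Matrix (Fin (nd j)) (Fin (nd j)) ℝ),
    IsUnit T ∧ (∀ j, IsUnit (Tj j)) ∧ ∀ j, Bt j = (Tj j)⁻¹ * B j * T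

open Classical in
/-- The map `φ`: `φ(B)_j = (B_j B_j^*)^{-1/2} B_j` (defined where `B_j B_j^*` is
positive definite, and as `B_j` otherwise). -/
def phiMap {m n : ℕ} {nd : Fin m → ℕ} (B : MTrans m n nd) : MTrans m n nd := fun j =>
  if h : (B j * (B j)ᵀ).PosDef then ((h.posSemidef.1.eigenvectorUnitary : Matrix (Fin (nd j)) (Fin (nd j)) ℝ) *
      diagonal (Real.sqrt ∘ h.posSemidef.1.eigenvalues) *
      (star h.posSemidef.1.eigenvectorUnitary : Matrix (Fin (nd j)) (Fin (nd j)) ℝ))⁻¹ * B j else B j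

open Classical in
/-- The map `ψ`: `ψ(B)_j = B_j M^{-1/2}` with `M = ∑ c_j B_j^* B_j` (defined where `M`
is positive definite, and as `B_j` otherwise). -/
def psiMap {m n : ℕ} {nd : Fin m → ℕ} (c : Fin m → ℝ) (B : MTrans m n nd) : MTrans m n nd :=
  fun j =>
    if h : (∑ i, c i • ((B i)ᵀ * B i)).PosDef then B j * ((h.posSemidef.1.eigenvectorUnitary : Matrix (Fin n) (Fin n) ℝ) *
      diagonal (Real.sqrt ∘ h.posSemidef.1.eigenvalues) *
      (star h.posSemidef.1.eigenvectorUnitary : Matrix (Fin n) (Fin n) ℝ))⁻¹ else B j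

/-- The BL scaling map `Φ = φ ∘ ψ`. -/
def PhiMap {m n : ℕ} {nd : Fin m → ℕ} (c : Fin m → ℝ) (B : MTrans m n nd) : MTrans m n nd :=
  phiMap (psiMap c B)

/-- The operator norm of a matrix, viewed as a linear map between Euclidean spaces. -/
def opNorm {a b : ℕ} (A : Matrix (Fin a) (Fin b) ℝ) : ℝ :=
  ‖LinearMap.toContinuousLinearMap (Matrix.toEuclideanLin A)‖


section BLHelpers

lemma measurable_mulVecFun {a b : ℕ} (A : Matrix (Fin a) (Fin b) ℝ) :
    Measurable (fun x : Fin b → ℝ => A *ᵥ x) := by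
  have h : Continuous (A.mulVecLin) := A.mulVecLin.continuous_of_finiteDimensional
  exact h.measurable

lemma blratio_le_blconst {m n : ℕ} {nd : Fin m → ℕ} {B : MTrans m n nd} {c : Fin m → ℝ}
    {f : ∀ j : Fin m, (Fin (nd j) → ℝ) → ℝ≥0∞} (hf : IsInput f) :
    BLratio B c f ≤ BLconst B c :=
  le_iSup₂ (f := fun g (_ : IsInput g) => BLratio B c g) f hf

lemma lintegral_mulVec {k : ℕ} {A : Matrix (Fin k) (Fin k) ℝ} (hA : A.det ≠ 0)
    {F : (Fin k → ℝ) → ℝ≥0∞} (hF : Measurable F) :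
    ∫⁻ x, F (A *ᵥ x) = ENNReal.ofReal |A.det|⁻¹ * ∫⁻ y, F y := by
  have hmap := Real.map_matrix_volume_pi_eq_smul_volume_pi (M := A) hA
  have hm : Measurable (Matrix.toLin' A) := by
    exact (Matrix.toLin' A).continuous_of_finiteDimensional.measurable
  calc ∫⁻ x, F (A *ᵥ x) = ∫⁻ x, F (Matrix.toLin' A x) := by simp [Matrix.toLin'_apply]
    _ = ∫⁻ y, F y ∂(Measure.map (Matrix.toLin' A) volume) := (lintegral_map hF hm).symm
    _ = ENNReal.ofReal |A.det|⁻¹ * ∫⁻ y, F y := by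
        rw [hmap, lintegral_smul_measure, abs_inv, smul_eq_mul]

lemma ker_eq_zero_of_blconst_lt_top {m n : ℕ} {nd : Fin m → ℕ} {B : MTrans m n nd}
    {c : Fin m → ℝ} (hc : ∀ j, 0 < c j) (hB : BLconst B c < ⊤)
    (u : Fin n → ℝ) (hu : ∀ j, B j *ᵥ u = 0) : u = 0 := by
  by_contra hu0
  set v : Fin n → ℝ := ‖u‖⁻¹ • u with hv
  have hvnorm : ‖v‖ = 1 := by
    rw [hv, norm_smul, norm_inv, norm_norm, inv_mul_cancel₀ (norm_ne_zero_iff.2 hu0)]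
  have hvker : ∀ j, B j *ᵥ v = 0 := fun j => by
    rw [hv, Matrix.mulVec_smul, hu j, smul_zero]
  classical
  set box : ∀ j : Fin m, Set (Fin (nd j) → ℝ) :=
    fun j => Set.pi Set.univ (fun _ => Set.Icc (-1:ℝ) 1) with hbox
  have hboxmeas : ∀ j, MeasurableSet (box j) :=
    fun j => MeasurableSet.univ_pi fun _ => measurableSet_Icc
  set f : ∀ j : Fin m, (Fin (nd j) → ℝ) → ℝ≥0∞ := fun j => (box j).indicator 1 with hfdef
  have hint : ∀ j, ∫⁻ y, f j y = volume (box j) := fun j => lintegral_indicator_one (hboxmeas j)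
  have hvol : ∀ j, volume (box j) = ∏ _i : Fin (nd j), ENNReal.ofReal 2 := by
    intro j
    rw [hbox, MeasureTheory.volume_pi_pi]
    congr 1; funext i; rw [Real.volume_Icc]; norm_num
  have hpos : ∀ j, 0 < ∫⁻ y, f j y := by
    intro j
    rw [hint j, hvol j]
    exact CanonicallyOrderedAdd.prod_pos.2 fun i _ => by simp
  have hfin : ∀ j, ∫⁻ y, f j y < ⊤ := by
    intro j
    rw [hint j, hvol j]
    exact ENNReal.prod_lt_top fun i _ => by simp
  have hinput : IsInput f := fun j => ⟨measurable_one.indicator (hboxmeas j), hpos j, hfin j⟩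
  set T : Set (Fin n → ℝ) := ⋂ j, (fun x => B j *ᵥ x) ⁻¹' (box j) with hT
  have hTmem : ∀ x, x ∈ T ↔ ∀ j, B j *ᵥ x ∈ box j := fun x => by simp [hT]
  have hTmeas : MeasurableSet T :=
    MeasurableSet.iInter fun j => (measurable_mulVecFun (B j)) (hboxmeas j)
  have hinteg : ∀ x, (∏ j, f j (B j *ᵥ x) ^ c j) = T.indicator 1 x := by
    intro x
    by_cases hx : x ∈ T
    · rw [Set.indicator_of_mem hx, Pi.one_apply]
      refine Finset.prod_eq_one fun j _ => ?_
      rw [hfdef]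
      simp only [Set.indicator_of_mem ((hTmem x).1 hx j), Pi.one_apply, ENNReal.one_rpow]
    · rw [Set.indicator_of_notMem hx]
      obtain ⟨j0, hj0⟩ : ∃ j, B j *ᵥ x ∉ box j := by
        by_contra h; push_neg at h; exact hx ((hTmem x).2 h)
      refine Finset.prod_eq_zero (Finset.mem_univ j0) ?_
      rw [hfdef]
      simp only [Set.indicator_of_notMem hj0]
      exact ENNReal.zero_rpow_of_pos (hc j0)
  have hTnhds : T ∈ 𝓝 (0 : Fin n → ℝ) := by
    rw [hT]
    refine Filter.iInter_mem.2 fun j => ?_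
    have hcont : Continuous fun x : Fin n → ℝ => B j *ᵥ x :=
      (B j).mulVecLin.continuous_of_finiteDimensional
    have hbn : box j ∈ 𝓝 (B j *ᵥ (0 : Fin n → ℝ)) := by
      rw [Matrix.mulVec_zero]
      refine Filter.mem_of_superset (Metric.ball_mem_nhds 0 one_pos) ?_
      intro y hy
      rw [Metric.mem_ball, dist_zero_right] at hy
      intro i _
      have h1 : |y i| ≤ ‖y‖ := by
        simpa [Real.norm_eq_abs] using norm_le_pi_norm y i
      exact Set.mem_Icc.2 (abs_le.1 (h1.trans hy.le))
    exact hcont.continuousAt.preimage_mem_nhds hbn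
  obtain ⟨ε, hε, hball⟩ := Metric.mem_nhds_iff.1 hTnhds
  have hinv : ∀ x ∈ T, ∀ t : ℝ, x + t • v ∈ T := by
    intro x hx t
    rw [hTmem] at hx ⊢
    intro j
    rw [Matrix.mulVec_add, Matrix.mulVec_smul, hvker j, smul_zero, add_zero]
    exact hx j
  set cb : ℕ → (Fin n → ℝ) := fun k => (3 * ε * k) • v with hcb
  have hsub : ∀ k, Metric.ball (cb k) ε ⊆ T := by
    intro k x hx
    have h1 : x - cb k ∈ T := by
      apply hball
      rw [Metric.mem_ball, dist_zero_right]
      simpa [dist_eq_norm] using hx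
    have h2 := hinv _ h1 (3 * ε * k)
    simpa [hcb] using h2
  have hdist : ∀ k l : ℕ, dist (cb k) (cb l) = 3 * ε * |(k:ℝ) - l| := by
    intro k l
    rw [hcb, dist_eq_norm, ← sub_smul, norm_smul, hvnorm, mul_one, Real.norm_eq_abs,
      ← mul_sub, abs_mul, abs_of_pos (by linarith : (0:ℝ) < 3 * ε)]
  have hdisj : Pairwise (Function.onFun Disjoint fun k => Metric.ball (cb k) ε) := by
    intro k l hkl
    rw [Function.onFun]
    apply Metric.ball_disjoint_ball
    rw [hdist k l]
    have h2 : (1:ℤ) ≤ |(k:ℤ) - (l:ℤ)| := Int.one_le_abs (by omega)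
    have h1 : (1:ℝ) ≤ |(k:ℝ) - l| := by exact_mod_cast h2
    nlinarith
  have hvolT : volume T = ⊤ := by
    refine top_le_iff.1 ?_
    have h1 : volume (⋃ k : ℕ, Metric.ball (cb k) ε) = ∑' k : ℕ, volume (Metric.ball (cb k) ε) :=
      measure_iUnion hdisj fun k => measurableSet_ball
    have h2 : ∀ k : ℕ, volume (Metric.ball (cb k) ε) = volume (Metric.ball (0 : Fin n → ℝ) ε) :=
      fun k => Measure.addHaar_ball_center volume _ _
    have h3 : (∑' _ : ℕ, volume (Metric.ball (0 : Fin n → ℝ) ε)) = ⊤ :=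
      ENNReal.tsum_const_eq_top_of_ne_zero (Metric.measure_ball_pos volume _ hε).ne'
    calc (⊤:ℝ≥0∞) = volume (⋃ k : ℕ, Metric.ball (cb k) ε) := by
          rw [h1]; simp_rw [h2]; rw [h3]
      _ ≤ volume T := measure_mono (Set.iUnion_subset hsub)
  have hnum : ∫⁻ x, ∏ j, f j (B j *ᵥ x) ^ c j = ⊤ := by
    rw [lintegral_congr hinteg, lintegral_indicator_one hTmeas, hvolT]
  have hD : (∏ j, (∫⁻ y, f j y) ^ c j) ≠ ⊤ :=
    (ENNReal.prod_lt_top fun j _ => ENNReal.rpow_lt_top_of_nonneg (hc j).le (hfin j).ne).ne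
  have hratio : BLratio B c f = ⊤ := by
    rw [BLratio, hnum, ENNReal.top_div_of_ne_top hD]
  exact hB.ne (top_le_iff.1 (hratio ▸ blratio_le_blconst hinput))

lemma blconst_lt_top_of_equiv {m n : ℕ} {nd : Fin m → ℕ} {B Bt : MTrans m n nd} {c : Fin m → ℝ}
    (hc : ∀ j, 0 < c j) {T : Matrix (Fin n) (Fin n) ℝ}
    {Tj : ∀ j, Matrix (Fin (nd j)) (Fin (nd j)) ℝ}
    (hT : T.det ≠ 0) (hTj : ∀ j, (Tj j).det ≠ 0)
    (hBt : ∀ j, Bt j = (Tj j)⁻¹ * B j * T) (hfin : BLconst B c < ⊤) :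
    BLconst Bt c < ⊤ := by
  classical
  set d : Fin m → ℝ≥0∞ := fun j => ENNReal.ofReal |(Tj j).det| with hd
  have hd0 : ∀ j, d j ≠ 0 := fun j => by
    simp [hd, ENNReal.ofReal_eq_zero, not_le, abs_pos, hTj j]
  have hdt : ∀ j, d j ≠ ⊤ := fun j => ENNReal.ofReal_ne_top
  set P : ℝ≥0∞ := ∏ j, (d j)⁻¹ ^ c j with hP
  have hP0 : P ≠ 0 := by
    rw [hP]
    refine (CanonicallyOrderedAdd.prod_pos.2 fun j _ => ?_).ne'
    exact ENNReal.rpow_pos (by simp [ENNReal.inv_ne_zero.2 (hdt j), pos_iff_ne_zero])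
      (by simp [ENNReal.inv_ne_top.2 (hd0 j)])
  have hPt : P ≠ ⊤ := by
    rw [hP]
    exact (ENNReal.prod_lt_top fun j _ =>
      ENNReal.rpow_lt_top_of_nonneg (hc j).le (ENNReal.inv_ne_top.2 (hd0 j))).ne
  set K : ℝ≥0∞ := ENNReal.ofReal |T.det|⁻¹ * P⁻¹ with hK
  have hKt : K ≠ ⊤ := by
    rw [hK]
    exact ENNReal.mul_ne_top ENNReal.ofReal_ne_top (ENNReal.inv_ne_top.2 hP0)
  have key : BLconst Bt c ≤ K * BLconst B c := by
    rw [BLconst]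
    refine iSup₂_le fun f hf => ?_
    set g : ∀ j : Fin m, (Fin (nd j) → ℝ) → ℝ≥0∞ := fun j y => f j ((Tj j)⁻¹ *ᵥ y) with hg
    have hgm : ∀ j, Measurable (g j) := fun j =>
      (hf j).1.comp (measurable_mulVecFun _)
    have hgint : ∀ j, ∫⁻ y, g j y = d j * ∫⁻ y, f j y := by
      intro j
      rw [hg]
      have hdet : ((Tj j)⁻¹).det ≠ 0 := by
        rw [Matrix.det_nonsing_inv, Ring.inverse_eq_inv']
        exact inv_ne_zero (hTj j)
      rw [lintegral_mulVec hdet (hf j).1]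
      congr 1
      rw [Matrix.det_nonsing_inv, Ring.inverse_eq_inv', abs_inv, inv_inv, hd]
    have hginput : IsInput g := by
      intro j
      refine ⟨hgm j, ?_, ?_⟩
      · rw [hgint j]
        exact ENNReal.mul_pos (hd0 j) (hf j).2.1.ne'
      · rw [hgint j]
        exact ENNReal.mul_lt_top (hdt j).lt_top (hf j).2.2
    set H : (Fin n → ℝ) → ℝ≥0∞ := fun y => ∏ j, g j (B j *ᵥ y) ^ c j with hHdef
    have hH : Measurable H := by
      refine Finset.measurable_prod _ fun j _ => ?_
      exact ((hgm j).comp (measurable_mulVecFun (B j))).pow measurable_const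
    have hnum : (∫⁻ x : Fin n → ℝ, ∏ j, f j (Bt j *ᵥ x) ^ c j)
        = ENNReal.ofReal |T.det|⁻¹ * ∫⁻ y, H y := by
      have hcomp : ∀ x, (∏ j, f j (Bt j *ᵥ x) ^ c j) = H (T *ᵥ x) := by
        intro x
        rw [hHdef]
        refine Finset.prod_congr rfl fun j _ => ?_
        rw [hBt j, hg, ← Matrix.mulVec_mulVec, ← Matrix.mulVec_mulVec]
      rw [lintegral_congr hcomp, lintegral_mulVec hT hH]
    have hden : (∏ j, (∫⁻ y, f j y) ^ c j) = P * ∏ j, (∫⁻ y, g j y) ^ c j := by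
      rw [hP, ← Finset.prod_mul_distrib]
      refine Finset.prod_congr rfl fun j _ => ?_
      rw [hgint j, ENNReal.mul_rpow_of_ne_top (hdt j) (hf j).2.2.ne, ← mul_assoc,
        ← ENNReal.mul_rpow_of_ne_top (ENNReal.inv_ne_top.2 (hd0 j)) (hdt j),
        ENNReal.inv_mul_cancel (hd0 j) (hdt j), ENNReal.one_rpow, one_mul]
    have hBLr : BLratio Bt c f = K * BLratio B c g := by
      rw [BLratio, BLratio, hnum, hden, hK, div_eq_mul_inv, div_eq_mul_inv,
        ENNReal.mul_inv (Or.inl hP0) (Or.inl hPt)]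
      ring
    rw [hBLr]
    exact mul_le_mul_right (blratio_le_blconst hginput) K
  calc BLconst Bt c ≤ K * BLconst B c := key
    _ < ⊤ := ENNReal.mul_lt_top hKt.lt_top hfin

lemma real_dotProduct_self_nonneg {k : ℕ} (w : Fin k → ℝ) : 0 ≤ w ⬝ᵥ w :=
  Finset.sum_nonneg fun _ _ => mul_self_nonneg _

lemma real_dotProduct_self_pos {k : ℕ} {w : Fin k → ℝ} (hw : w ≠ 0) : 0 < w ⬝ᵥ w := by
  rcases (real_dotProduct_self_nonneg w).lt_or_eq with h | h
  · exact h
  · exact absurd (dotProduct_star_self_eq_zero.1 (by simpa [star_trivial] using h.symm)) hw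

lemma posDef_sum_smul {m n : ℕ} {nd : Fin m → ℕ} {B : ∀ j : Fin m, Matrix (Fin (nd j)) (Fin n) ℝ}
    {c : Fin m → ℝ} (hc : ∀ j, 0 < c j)
    (hker : ∀ u : Fin n → ℝ, (∀ j, B j *ᵥ u = 0) → u = 0) :
    (∑ j, c j • ((B j)ᵀ * B j)).PosDef := by
  refine posDef_iff_dotProduct_mulVec.2 ⟨?_, ?_⟩
  · rw [Matrix.IsHermitian, conjTranspose_eq_transpose_of_trivial, Matrix.transpose_sum]
    refine Finset.sum_congr rfl fun j _ => ?_
    rw [Matrix.transpose_smul, Matrix.transpose_mul, Matrix.transpose_transpose]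
  · intro x hx
    have key : star x ⬝ᵥ (∑ j, c j • ((B j)ᵀ * B j)) *ᵥ x
        = ∑ j, c j * ((B j *ᵥ x) ⬝ᵥ (B j *ᵥ x)) := by
      have hsum : (∑ j, c j • ((B j)ᵀ * B j)) *ᵥ x = ∑ j, (c j • ((B j)ᵀ * B j)) *ᵥ x :=
        map_sum (Matrix.mulVec.addMonoidHomLeft x) (fun j => c j • ((B j)ᵀ * B j)) Finset.univ
      have hds : ∀ w : Fin m → (Fin n → ℝ), x ⬝ᵥ (∑ j, w j) = ∑ j, x ⬝ᵥ w j := by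
        intro w
        simp only [dotProduct, Finset.sum_apply, Finset.mul_sum]
        exact Finset.sum_comm
      rw [star_trivial, hsum, hds]
      refine Finset.sum_congr rfl fun j _ => ?_
      rw [Matrix.smul_mulVec, dotProduct_smul, smul_eq_mul, ← Matrix.mulVec_mulVec,
        Matrix.dotProduct_mulVec, Matrix.vecMul_transpose]
    rw [key]
    obtain ⟨j0, hj0⟩ : ∃ j, B j *ᵥ x ≠ 0 := by
      by_contra h; push_neg at h; exact hx (hker x h)
    exact Finset.sum_pos'
      (fun j _ => mul_nonneg (hc j).le (real_dotProduct_self_nonneg _))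
      ⟨j0, Finset.mem_univ _, mul_pos (hc j0) (real_dotProduct_self_pos hj0)⟩

section algebra
variable {k n : ℕ} {M : Matrix (Fin n) (Fin n) ℝ}

abbrev msq {k : ℕ} {M : Matrix (Fin k) (Fin k) ℝ} (h : M.IsHermitian) :
    Matrix (Fin k) (Fin k) ℝ :=
  (h.eigenvectorUnitary : Matrix (Fin k) (Fin k) ℝ) * diagonal (Real.sqrt ∘ h.eigenvalues) *
    (star h.eigenvectorUnitary : Matrix (Fin k) (Fin k) ℝ)

lemma msq_mul_self (hM : M.PosDef) : msq hM.posSemidef.1 * msq hM.posSemidef.1 = M := by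
  have hU : (star hM.posSemidef.1.eigenvectorUnitary : Matrix (Fin n) (Fin n) ℝ) *
      (hM.posSemidef.1.eigenvectorUnitary : Matrix (Fin n) (Fin n) ℝ) = 1 :=
    Unitary.coe_star_mul_self _
  have hD : diagonal (Real.sqrt ∘ hM.posSemidef.1.eigenvalues) *
      diagonal (Real.sqrt ∘ hM.posSemidef.1.eigenvalues) =
      diagonal (RCLike.ofReal ∘ hM.posSemidef.1.eigenvalues) := by
    rw [diagonal_mul_diagonal, RCLike.ofReal_real_eq_id]
    congr 1; funext i
    exact Real.mul_self_sqrt (hM.eigenvalues_pos i).le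
  conv_rhs => rw [hM.posSemidef.1.spectral_theorem, Unitary.conjStarAlgAut_apply]
  simp only [msq, Matrix.mul_assoc]
  rw [← Matrix.mul_assoc (star _ : Matrix (Fin n) (Fin n) ℝ) _ _, hU, Matrix.one_mul,
    ← Matrix.mul_assoc (diagonal _) (diagonal _), hD]

lemma sqrt_isUnit (hM : M.PosDef) : IsUnit (msq hM.posSemidef.1) := by
  rw [Matrix.isUnit_iff_isUnit_det, isUnit_iff_ne_zero]
  intro h
  have hdet : M.det = 0 := by
    rw [← msq_mul_self hM, Matrix.det_mul, h, mul_zero]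
  exact hM.det_pos.ne' hdet

lemma sqrt_transpose (hM : M.PosDef) : (msq hM.posSemidef.1)ᵀ = msq hM.posSemidef.1 := by
  rw [← conjTranspose_eq_transpose_of_trivial]
  simp only [msq, ← Matrix.star_eq_conjTranspose, star_mul, star_star, Matrix.mul_assoc]
  rw [Matrix.star_eq_conjTranspose (diagonal _), Matrix.diagonal_conjTranspose, star_trivial]

lemma psi_mul_transpose_posDef (hM : M.PosDef) {A : Matrix (Fin k) (Fin n) ℝ}
    (hA : A * Aᵀ = 1) :
    ((A * (msq hM.posSemidef.1)⁻¹) * (A * (msq hM.posSemidef.1)⁻¹)ᵀ).PosDef := by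
  set S := msq hM.posSemidef.1 with hS
  have hSu : IsUnit S := sqrt_isUnit hM
  have hSd : IsUnit S.det := (Matrix.isUnit_iff_isUnit_det S).1 hSu
  have hTinj : ∀ x : Fin k → ℝ, x ≠ 0 → (A * S⁻¹)ᵀ *ᵥ x ≠ 0 := by
    intro x hx h0
    have h1 : (A * S⁻¹)ᵀ = (S⁻¹)ᵀ * Aᵀ := by rw [Matrix.transpose_mul]
    rw [h1, ← Matrix.mulVec_mulVec] at h0
    have h2 : (S⁻¹)ᵀ = S⁻¹ := by rw [Matrix.transpose_nonsing_inv, sqrt_transpose hM]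
    rw [h2] at h0
    have h3 : Aᵀ *ᵥ x = 0 := by
      have := congrArg (fun y => S *ᵥ y) h0
      simpa [Matrix.mulVec_mulVec, ← Matrix.mul_assoc, Matrix.mul_nonsing_inv _ hSd] using this
    have h4 : x = 0 := by
      have := congrArg (fun y => A *ᵥ y) h3
      simpa [Matrix.mulVec_mulVec, hA] using this
    exact hx h4
  refine posDef_iff_dotProduct_mulVec.2 ⟨?_, ?_⟩
  · rw [Matrix.IsHermitian, conjTranspose_eq_transpose_of_trivial, Matrix.transpose_mul,
      Matrix.transpose_transpose]
  · intro x hx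
    have key : star x ⬝ᵥ ((A * S⁻¹) * (A * S⁻¹)ᵀ) *ᵥ x
        = ((A * S⁻¹)ᵀ *ᵥ x) ⬝ᵥ ((A * S⁻¹)ᵀ *ᵥ x) := by
      rw [star_trivial, ← Matrix.mulVec_mulVec, Matrix.dotProduct_mulVec]
      congr 1
      rw [← Matrix.mulVec_transpose]
    rw [key]
    exact real_dotProduct_self_pos (hTinj x hx)

end algebra

end BLHelpers


theorem PhiMap_wellDefined_equiv_memF {m n : ℕ} {nd : Fin m → ℕ} (c : Fin m → ℝ)
    (hc : ∀ j, 0 < c j) (B : MTrans m n nd) (hB : MemF B c) :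
    (∑ j, c j • ((B j)ᵀ * B j)).PosDef ∧
      (∀ j, (psiMap c B j * (psiMap c B j)ᵀ).PosDef) ∧
      EquivTrans B (PhiMap c B) ∧ MemF (PhiMap c B) c := by
  classical
  obtain ⟨hfin, hnorm⟩ := hB
  have hker : ∀ u : Fin n → ℝ, (∀ j, B j *ᵥ u = 0) → u = 0 :=
    ker_eq_zero_of_blconst_lt_top hc hfin
  have hM : (∑ j, c j • ((B j)ᵀ * B j)).PosDef := posDef_sum_smul hc hker
  set S := msq hM.posSemidef.1 with hSdef
  have hSu : IsUnit S := sqrt_isUnit hM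
  have hpsi : ∀ j, psiMap c B j = B j * S⁻¹ := fun j => by
    rw [psiMap, dif_pos hM]
  have hpsiPD : ∀ j, (psiMap c B j * (psiMap c B j)ᵀ).PosDef := fun j => by
    rw [hpsi j]
    exact psi_mul_transpose_posDef hM (hnorm j)
  set N : ∀ j, Matrix (Fin (nd j)) (Fin (nd j)) ℝ := fun j => msq (hpsiPD j).posSemidef.1 with hN
  have hNu : ∀ j, IsUnit (N j) := fun j => sqrt_isUnit (hpsiPD j)
  have hNd : ∀ j, IsUnit (N j).det := fun j => (Matrix.isUnit_iff_isUnit_det _).1 (hNu j)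
  have hPhi' : ∀ j, PhiMap c B j = (N j)⁻¹ * psiMap c B j := fun j => by
    rw [PhiMap, phiMap, dif_pos (hpsiPD j)]
  have hPhi : ∀ j, PhiMap c B j = (N j)⁻¹ * B j * S⁻¹ := fun j => by
    rw [hPhi' j, hpsi j, Matrix.mul_assoc]
  have hSinv : IsUnit (S⁻¹) := Matrix.isUnit_nonsing_inv_iff.2 hSu
  have hEquiv : EquivTrans B (PhiMap c B) := ⟨S⁻¹, N, hSinv, hNu, hPhi⟩
  have hnorm' : ∀ j, PhiMap c B j * (PhiMap c B j)ᵀ = 1 := by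
    intro j
    have e1 : (PhiMap c B j)ᵀ = (psiMap c B j)ᵀ * (N j)⁻¹ := by
      rw [hPhi' j, Matrix.transpose_mul, Matrix.transpose_nonsing_inv, sqrt_transpose (hpsiPD j)]
    have e2 : psiMap c B j * (psiMap c B j)ᵀ = N j * N j :=
      (msq_mul_self (hpsiPD j)).symm
    rw [e1, hPhi' j, Matrix.mul_assoc ((N j)⁻¹) (psiMap c B j) _,
      ← Matrix.mul_assoc (psiMap c B j) ((psiMap c B j)ᵀ) ((N j)⁻¹), e2,
      Matrix.mul_assoc (N j) (N j) ((N j)⁻¹), Matrix.mul_nonsing_inv _ (hNd j),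
      Matrix.mul_one, Matrix.nonsing_inv_mul _ (hNd j)]
  have hblfin : BLconst (PhiMap c B) c < ⊤ := by
    refine blconst_lt_top_of_equiv hc ?_ ?_ hPhi hfin
    · exact ((Matrix.isUnit_iff_isUnit_det _).1 hSinv).ne_zero
    · exact fun j => (hNd j).ne_zero
  exact ⟨hM, hpsiPD, hEquiv, ⟨hblfin, hnorm'⟩⟩

end
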